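/- (Half-Scales Lemma) Let Ω⁺ ⊂ ℝ² be a Jordan domain, Ω⁻ = ℝ² \ closure(Ω⁺), and Γ = ∂Ω⁺ = ∂Ω⁻. Fix α ∈ (0,1) and C₀ > 0, and suppose there exists r₀ > 0 such that ε(x,r) ≤ C₀·r^α for all x ∈ Γ and all 0 < r ≤ r₀. Then there exists ρ₀ ≤ r₀ such that for every x₀ ∈ Γ, every 0 < s₀ ≤ ρ₀, and every y ∈ ∂B(x₀,s₀) ∩ Γ the following holds. Let x₁ = (x₀ + y)/2 be the midpoint of the segment from x₀ to y. Then there exists a point z ∈ Γ such that: (i) |x₁ − z| < C₀·s₀^{α/2 + 1}; (ii) |z − x₀| = |z − y| =: s₁ and |s₁ − s₀/2| < C₀²·s₀^{α+1}; (iii) the angle between the line through x₀ and y and the line through x₀ and z is at most C₁·s₀^{α/2}, and the angle between the line through x₀ and y and the line through z and y is at most C₁·s₀^{α/2}, where C₁ = 2C₀ + 2C₀². -/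

import Mathlib

open Set Metric MeasureTheory
open scoped RealInnerProductSpace

noncomputable section

abbrev E2 := EuclideanSpace ℝ (Fin 2)

/-- The point on the circle of center `x` and radius `r` at angle `t`. -/
def circlePt (x : E2) (r t : ℝ) : E2 :=
  x + r • (EuclideanSpace.equiv (Fin 2) ℝ).symm ![Real.cos t, Real.sin t]

/-- `A` is an open arc of the circle `∂B(x,r)`. -/
def IsOpenArc (x : E2) (r : ℝ) (A : Set E2) : Prop :=
  ∃ a b : ℝ, a < b ∧ b - a ≤ 2 * Real.pi ∧ A = circlePt x r '' Set.Ioo a b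

/-- The `H¹`-measure of the largest open arc of `∂B(x,r)` contained in `Ω`. -/
def maxArcMeasure (Ω : Set E2) (x : E2) (r : ℝ) : ℝ :=
  (⨆ A ∈ {A | IsOpenArc x r A ∧ A ⊆ Ω}, μH[1] A).toReal

/-- The Carleson ε-function of the Jordan domain `Ω⁺`, where `Ω⁻ = ℝ² \ closure Ω⁺`. -/
def carlesonEps (Ω : Set E2) (x : E2) (r : ℝ) : ℝ :=
  (1 / r) * max |Real.pi * r - maxArcMeasure Ω x r|
      |Real.pi * r - maxArcMeasure ((closure Ω)ᶜ) x r|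

/-- `Γ` is a Jordan curve: the image of a continuous injective map of the unit circle. -/
def IsJordanCurve (Γ : Set E2) : Prop :=
  ∃ f : Metric.sphere (0 : ℝ × ℝ) 1 → E2,
    Continuous f ∧ Function.Injective f ∧ Set.range f = Γ

/-- A Jordan domain: an open connected set whose boundary is a Jordan curve. -/
def IsJordanDomain (Ω : Set E2) : Prop :=
  IsOpen Ω ∧ IsConnected Ω ∧ IsJordanCurve (frontier Ω)

/-- An affine line in the plane. -/
def IsAffineLine (L : Set E2) : Prop :=
  ∃ p v : E2, v ≠ 0 ∧ L = {y | ∃ t : ℝ, y = p + t • v}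

/-- The (smaller) angle between the lines spanned by `u` and `v`, an element of `[0, π/2]`. -/
def lineAngle (u v : E2) : ℝ :=
  min (InnerProductGeometry.angle u v) (Real.pi - InnerProductGeometry.angle u v)

/-! ### Auxiliary lemmas -/

local notation "π" => Real.pi

lemma two_pi_pos : (0:ℝ) < 2 * π := by positivity

/-! #### Coordinate geometry of `circlePt` -/

lemma circlePt_apply (x : E2) (r t : ℝ) (i : Fin 2) :
    circlePt x r t i = x i + r * (![Real.cos t, Real.sin t] i) := rfl

lemma circlePt_periodic (x : E2) (r t : ℝ) (m : ℤ) :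
    circlePt x r (t + 2 * π * m) = circlePt x r t := by
  unfold circlePt
  congr 1
  have hc : Real.cos (t + 2 * π * m) = Real.cos t := by
    rw [show t + 2 * π * m = t + m * (2 * π) by ring, Real.cos_add_int_mul_two_pi]
  have hs : Real.sin (t + 2 * π * m) = Real.sin t := by
    rw [show t + 2 * π * m = t + m * (2 * π) by ring, Real.sin_add_int_mul_two_pi]
  rw [hc, hs]

lemma dist_circlePt_sq (x : E2) (r t s : ℝ) :
    dist (circlePt x r t) (circlePt x r s) ^ 2 = r ^ 2 * (2 - 2 * Real.cos (t - s)) := by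
  rw [EuclideanSpace.dist_eq]
  rw [Real.sq_sqrt (by positivity)]
  simp only [Fin.sum_univ_two, circlePt_apply, Real.dist_eq, sq_abs]
  simp only [Matrix.cons_val_zero, Matrix.cons_val_one, Matrix.head_cons]
  have h := Real.cos_sub t s
  nlinarith [Real.sin_sq_add_cos_sq t, Real.sin_sq_add_cos_sq s]

lemma dist_circlePt_center (x : E2) {r : ℝ} (t : ℝ) (hr : 0 ≤ r) :
    dist (circlePt x r t) x = r := by
  have : dist (circlePt x r t) x ^ 2 = r ^ 2 := by
    rw [EuclideanSpace.dist_eq, Real.sq_sqrt (by positivity)]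
    simp only [Fin.sum_univ_two, circlePt_apply, Real.dist_eq, sq_abs]
    simp only [Matrix.cons_val_zero, Matrix.cons_val_one, Matrix.head_cons]
    nlinarith [Real.sin_sq_add_cos_sq t]
  have h1 : 0 ≤ dist (circlePt x r t) x := dist_nonneg
  nlinarith

lemma exists_angle {p x : E2} {r : ℝ} (hr : 0 < r) (h : dist p x = r) :
    ∃ θ : ℝ, p = circlePt x r θ := by
  set w0 : ℝ := p 0 - x 0 with hw0
  set w1 : ℝ := p 1 - x 1 with hw1
  have hsq : w0 ^ 2 + w1 ^ 2 = r ^ 2 := by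
    have := h
    rw [EuclideanSpace.dist_eq] at this
    have h2 : Real.sqrt (∑ i : Fin 2, (p i - x i)^2) = r := by
      have hsum : ∑ i : Fin 2, (p i - x i)^2 = ∑ i : Fin 2, dist (p i) (x i) ^ 2 :=
        Finset.sum_congr rfl (fun i _ => by rw [Real.dist_eq, sq_abs])
      rw [hsum]; exact this
    have h3 := Real.sq_sqrt (by positivity : (0:ℝ) ≤ ∑ i : Fin 2, (p i - x i)^2)
    rw [h2] at h3
    simpa [Fin.sum_univ_two] using h3.symm
  set z : ℂ := ⟨w0, w1⟩ with hz
  have hzne : z ≠ 0 := by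
    intro hz0
    have h0 : w0 = 0 := congrArg Complex.re hz0
    have h1 : w1 = 0 := congrArg Complex.im hz0
    rw [h0, h1] at hsq
    nlinarith
  have habs : ‖z‖ = r := by
    have : ‖z‖ = Real.sqrt (w0^2 + w1^2) := by
      rw [Complex.norm_def, Complex.normSq_apply]; simp [hz]; ring_nf
    rw [this, hsq, Real.sqrt_sq hr.le]
  refine ⟨Complex.arg z, ?_⟩
  have hcos : Real.cos (Complex.arg z) = w0 / r := by
    rw [Complex.cos_arg hzne, habs]
  have hsin : Real.sin (Complex.arg z) = w1 / r := by
    rw [Complex.sin_arg, habs]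
  have h0 : r * Real.cos z.arg = w0 := by rw [hcos]; field_simp
  have h1 : r * Real.sin z.arg = w1 := by rw [hsin]; field_simp
  ext i
  fin_cases i
  · show p 0 = circlePt x r z.arg 0
    rw [circlePt_apply]
    simp only [Matrix.cons_val_zero]
    rw [h0, hw0]; ring
  · show p 1 = circlePt x r z.arg 1
    rw [circlePt_apply]
    simp only [Matrix.cons_val_one, Matrix.head_cons, Matrix.cons_val_zero]
    rw [h1, hw1]; ring

/-! #### Hausdorff measure of arcs -/

lemma circlePt_lipschitz (x : E2) {r : ℝ} (hr : 0 ≤ r) :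
    LipschitzWith r.toNNReal (circlePt x r) := by
  apply LipschitzWith.of_dist_le_mul
  intro t s
  have h1 : dist (circlePt x r t) (circlePt x r s) ^ 2 = r ^ 2 * (2 - 2 * Real.cos (t - s)) :=
    dist_circlePt_sq x r t s
  have h2 : 2 - 2 * Real.cos (t - s) ≤ (t - s) ^ 2 := by
    have := Real.one_sub_sq_div_two_le_cos (x := t - s)
    linarith
  have h3 : (r.toNNReal : ℝ) = r := Real.coe_toNNReal r hr
  rw [h3, Real.dist_eq]
  have h4 : dist (circlePt x r t) (circlePt x r s) ^ 2 ≤ (r * |t - s|) ^ 2 := by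
    rw [mul_pow, sq_abs, h1]
    nlinarith
  have h5 : 0 ≤ r * |t - s| := by positivity
  nlinarith [dist_nonneg (x := circlePt x r t) (y := circlePt x r s)]

lemma hausdorff_Ioo (a b : ℝ) : μH[1] (Set.Ioo a b) = ENNReal.ofReal (b - a) := by
  rw [MeasureTheory.hausdorffMeasure_real, Real.volume_Ioo]

lemma arc_measure_le (x : E2) {r : ℝ} (hr : 0 ≤ r) (a b : ℝ) :
    μH[1] (circlePt x r '' Set.Ioo a b) ≤ ENNReal.ofReal (r * (b - a)) := by
  have h := (circlePt_lipschitz x hr).hausdorffMeasure_image_le zero_le_one (Set.Ioo a b)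
  rw [hausdorff_Ioo] at h
  refine h.trans ?_
  rw [ENNReal.rpow_one, ENNReal.ofReal_mul hr]
  gcongr
  exact le_of_eq rfl

/-- Existence of wide arcs from a bound on the defect of `maxArcMeasure`. -/
lemma arcs_exist {Ω : Set E2} {x : E2} {r C η : ℝ} (hr : 0 < r)
    (hM : |π * r - maxArcMeasure Ω x r| ≤ C) (hC : 0 ≤ C) (hCπ : C < π * r)
    (hη : 0 < η) :
    ∃ a b : ℝ, a < b ∧ b - a ≤ 2 * π ∧ π - C / r - η < b - a ∧
      circlePt x r '' Set.Ioo a b ⊆ Ω := by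
  set S := ⨆ A ∈ {A | IsOpenArc x r A ∧ A ⊆ Ω}, μH[1] A with hS
  have hMdef : maxArcMeasure Ω x r = S.toReal := rfl
  have hL : π * r - C ≤ S.toReal := by
    linarith [(abs_le.mp hM).2]
  have hlt : ENNReal.ofReal (π * r - C - r * η) < S := by
    have h2 : ENNReal.ofReal (π * r - C) ≤ S := ENNReal.ofReal_le_of_le_toReal hL
    refine lt_of_lt_of_le ?_ h2
    rw [ENNReal.ofReal_lt_ofReal_iff (by linarith)]
    nlinarith
  rw [hS, lt_iSup_iff] at hlt
  obtain ⟨A, hlt⟩ := hlt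
  rw [lt_iSup_iff] at hlt
  obtain ⟨hA, hlt⟩ := hlt
  obtain ⟨⟨a, b, hab, hble, hAeq⟩, hsub⟩ := hA
  refine ⟨a, b, hab, hble, ?_, by rw [← hAeq]; exact hsub⟩
  have hub : μH[1] A ≤ ENNReal.ofReal (r * (b - a)) := by
    rw [hAeq]; exact arc_measure_le x hr.le a b
  have := lt_of_lt_of_le hlt hub
  rw [ENNReal.ofReal_lt_ofReal_iff'] at this
  have h3 := this.1
  have hC' : C / r * r = C := div_mul_cancel₀ C hr.ne'
  have h5 : (π - C / r - η) * r < (b - a) * r := by nlinarith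
  exact lt_of_mul_lt_mul_right h5 hr.le

/-! #### Combinatorics of arcs avoiding points, on the angle line -/

lemma int_step1 {c : ℝ} {k : ℤ} (h : c ≤ 2 * π * k) (hc : 0 < c) : 1 ≤ k := by
  by_contra h'
  push_neg at h'
  have hk : (k : ℝ) ≤ 0 := by exact_mod_cast Int.lt_add_one_iff.mp h'
  nlinarith [Real.pi_pos]

lemma int_step2 {c : ℝ} {k : ℤ} (h : c ≤ 2 * π * k) (hc : 2 * π < c) : 2 ≤ k := by
  by_contra h'
  push_neg at h'
  have hk : (k : ℝ) ≤ 1 := by exact_mod_cast Int.lt_add_one_iff.mp h'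
  nlinarith [Real.pi_pos]

lemma avoid_point {a b ψ : ℝ} (hb : b - a ≤ 2 * π)
    (h : ∀ m : ℤ, ψ + 2 * π * m ∉ Ioo a b) :
    ∃ m : ℤ, ψ + 2 * π * m ≤ a ∧ b ≤ ψ + 2 * π * (m + 1) := by
  set m : ℤ := ⌊(a - ψ) / (2 * π)⌋ with hm
  have h1 : (m : ℝ) ≤ (a - ψ) / (2 * π) := Int.floor_le _
  have h2 : (a - ψ) / (2 * π) < (m : ℝ) + 1 := Int.lt_floor_add_one _
  have h1' : (m : ℝ) * (2 * π) ≤ a - ψ := (le_div_iff₀ two_pi_pos).mp h1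
  have h2' : a - ψ < ((m : ℝ) + 1) * (2 * π) := (div_lt_iff₀ two_pi_pos).mp h2
  refine ⟨m, by linarith, ?_⟩
  by_contra hlt
  push_neg at hlt
  exact h (m + 1) ⟨by push_cast; linarith, by push_cast; linarith⟩

lemma avoid_interval {a₁ b₁ a₂ b₂ : ℝ} (h₁ : a₁ < b₁) (h₂ : a₂ < b₂)
    (h : ∀ (m : ℤ), ∀ t ∈ Ioo a₁ b₁, t + 2 * π * m ∉ Ioo a₂ b₂) :
    ∃ m : ℤ, b₁ + 2 * π * m ≤ a₂ ∧ b₂ ≤ a₁ + 2 * π * (m + 1) := by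
  set m : ℤ := ⌊(a₂ - b₁) / (2 * π)⌋ with hm
  have h1 : (m : ℝ) ≤ (a₂ - b₁) / (2 * π) := Int.floor_le _
  have h2 : (a₂ - b₁) / (2 * π) < (m : ℝ) + 1 := Int.lt_floor_add_one _
  have h1' : (m : ℝ) * (2 * π) ≤ a₂ - b₁ := (le_div_iff₀ two_pi_pos).mp h1
  have h2' : a₂ - b₁ < ((m : ℝ) + 1) * (2 * π) := (div_lt_iff₀ two_pi_pos).mp h2
  refine ⟨m, by linarith, ?_⟩
  by_contra hlt
  push_neg at hlt
  set c : ℝ := max a₂ (a₁ + 2 * π * ((m : ℝ) + 1)) with hc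
  set d : ℝ := min b₂ (b₁ + 2 * π * ((m : ℝ) + 1)) with hd
  have hcd : c < d := by
    rw [hc, hd]
    apply max_lt <;> [skip; skip] <;> apply lt_min_iff.mpr <;> constructor <;> linarith
  set t : ℝ := (c + d) / 2 with ht
  have htm : t - 2 * π * ((m : ℤ) + 1 : ℤ) ∈ Ioo a₁ b₁ := by
    constructor
    · push_cast
      have : a₁ + 2 * π * ((m : ℝ) + 1) ≤ c := le_max_right _ _
      linarith
    · push_cast
      have : d ≤ b₁ + 2 * π * ((m : ℝ) + 1) := min_le_right _ _
      linarith
  have := h (m + 1) _ htm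
  apply this
  constructor
  · push_cast
    have : a₂ ≤ c := le_max_left _ _
    linarith
  · push_cast
    have : d ≤ b₂ := min_le_left _ _
    linarith

/-- If two wide disjoint arcs avoid five suitably placed points, contradiction. -/
lemma gap_forcing (τ : ℝ) {a₁ b₁ a₂ b₂ β : ℝ} (hβ0 : 0 < β) (hβ : β < π / 6)
    (hw1 : π - β ≤ b₁ - a₁) (hw1' : b₁ - a₁ ≤ 2 * π)
    (hw2 : π - β ≤ b₂ - a₂) (hw2' : b₂ - a₂ ≤ 2 * π)
    (hm1 : ∀ m : ℤ, τ - π / 3 + 2 * π * m ∉ Ioo a₁ b₁)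
    (hm2 : ∀ m : ℤ, τ + 2 * π * m ∉ Ioo a₁ b₁)
    (hm3 : ∀ m : ℤ, τ + π / 3 + 2 * π * m ∉ Ioo a₁ b₁)
    (hm4 : ∀ m : ℤ, τ + 2 * π * m ∉ Ioo a₂ b₂)
    (hdisj : ∀ (m : ℤ), ∀ t ∈ Ioo a₁ b₁, t + 2 * π * m ∉ Ioo a₂ b₂) : False := by
  have h₁ : a₁ < b₁ := by nlinarith [Real.pi_pos]
  have h₂ : a₂ < b₂ := by nlinarith [Real.pi_pos]
  obtain ⟨m₁, hA1, hB1⟩ := avoid_point hw1' hm1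
  obtain ⟨m₂, hA2, hB2⟩ := avoid_point hw1' hm2
  obtain ⟨m₃, hA3, hB3⟩ := avoid_point hw1' hm3
  obtain ⟨m', hA4, hB4⟩ := avoid_point hw2' hm4
  obtain ⟨m, hI1, hI2⟩ := avoid_interval h₁ h₂ hdisj
  have p1 : (1:ℤ) ≤ m₂ + 1 - m₃ := by
    apply int_step1 (c := π - β + π/3)
    · push_cast; linarith
    · nlinarith [Real.pi_pos]
  have p2 : (1:ℤ) ≤ m₃ + 1 - m₂ := by
    apply int_step1 (c := π - β - π/3)
    · push_cast; linarith
    · nlinarith [Real.pi_pos]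
  have e23 : m₂ = m₃ := by omega
  have p3 : (1:ℤ) ≤ m₁ + 1 - m₃ := by
    apply int_step1 (c := π - β + 2*π/3)
    · push_cast; linarith
    · nlinarith [Real.pi_pos]
  have p4 : (1:ℤ) ≤ m₃ + 1 - m₁ := by
    apply int_step1 (c := π - β - 2*π/3)
    · push_cast; linarith
    · nlinarith [Real.pi_pos]
  have e13 : m₁ = m₃ := by omega
  have p5 : (2:ℤ) ≤ m' + 1 - m₃ - m := by
    apply int_step2 (c := π - β + 4*π/3 - β)
    · push_cast
      have : τ + π/3 + 2*π*m₃ + (π - β) + 2*π*m ≤ a₂ := by linarith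
      linarith
    · nlinarith [Real.pi_pos]
  have p6 : (1:ℤ) ≤ m₃ + m + 1 - m' := by
    apply int_step1 (c := π - β - 2*π/3 - β)
    · push_cast
      have hb1 : b₁ ≤ τ - π/3 + 2*π*((m₁:ℝ) + 1) := hB1
      have ha1 : a₁ ≤ b₁ - (π - β) := by linarith
      have hbd : b₂ ≤ τ - π/3 + 2*π*((m₁:ℝ)+1) - (π - β) + 2*π*((m:ℝ)+1) := by linarith
      have e13' : (m₁:ℝ) = m₃ := by exact_mod_cast congrArg (Int.cast : ℤ → ℝ) e13
      rw [e13'] at hbd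
      linarith
    · nlinarith [Real.pi_pos]
  omega

/-- Two points avoiding two wide disjoint arcs are within `2β` of each other
or of antipodal, in angle. -/
lemma same_gap {a₁ b₁ a₂ b₂ β θ₁ θ₂ : ℝ} (hβ0 : 0 < β)
    (h₁ : a₁ < b₁) (h₂ : a₂ < b₂)
    (hw1 : π - β ≤ b₁ - a₁) (hw1' : b₁ - a₁ ≤ 2 * π)
    (hw2 : π - β ≤ b₂ - a₂) (hw2' : b₂ - a₂ ≤ 2 * π)
    (hdisj : ∀ (m : ℤ), ∀ t ∈ Ioo a₁ b₁, t + 2 * π * m ∉ Ioo a₂ b₂)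
    (hp1 : ∀ m : ℤ, θ₁ + 2 * π * m ∉ Ioo a₁ b₁)
    (hp2 : ∀ m : ℤ, θ₁ + 2 * π * m ∉ Ioo a₂ b₂)
    (hq1 : ∀ m : ℤ, θ₂ + 2 * π * m ∉ Ioo a₁ b₁)
    (hq2 : ∀ m : ℤ, θ₂ + 2 * π * m ∉ Ioo a₂ b₂) :
    ∃ m : ℤ, |θ₁ - θ₂ - π * m| ≤ 2 * β := by
  obtain ⟨m₀, hI1, hI2⟩ := avoid_interval h₁ h₂ hdisj
  set A := a₂ - 2 * π * m₀ with hA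
  set B := b₂ - 2 * π * m₀ with hB
  have hb₁A : b₁ ≤ A := by rw [hA]; linarith
  have hBa₁ : B ≤ a₁ + 2 * π := by rw [hB]; push_cast at hI2 ⊢; linarith
  have hAB : A < B := by rw [hA, hB]; linarith
  have reduce : ∀ θ : ℝ, (∀ m : ℤ, θ + 2 * π * m ∉ Ioo a₁ b₁) →
      (∀ m : ℤ, θ + 2 * π * m ∉ Ioo a₂ b₂) →
      ∃ j : ℤ, (b₁ ≤ θ - 2 * π * j ∧ θ - 2 * π * j ≤ A) ∨
               (B ≤ θ - 2 * π * j ∧ θ - 2 * π * j ≤ a₁ + 2 * π) := by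
    intro θ hθ1 hθ2
    set j : ℤ := ⌊(θ - b₁) / (2 * π)⌋ with hj
    have h1 : (j : ℝ) * (2 * π) ≤ θ - b₁ := (le_div_iff₀ two_pi_pos).mp (Int.floor_le _)
    have h2 : θ - b₁ < ((j : ℝ) + 1) * (2 * π) := (div_lt_iff₀ two_pi_pos).mp (Int.lt_floor_add_one _)
    refine ⟨j, ?_⟩
    set t := θ - 2 * π * j with ht
    have htlb : b₁ ≤ t := by rw [ht]; linarith
    have htub : t < b₁ + 2 * π := by rw [ht]; linarith
    by_contra hcon
    push_neg at hcon
    obtain ⟨hc1, hc2⟩ := hcon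
    rcases le_or_gt t A with hA1 | hA2
    · exact absurd hA1 (not_le.mpr (hc1 htlb))
    · rcases lt_or_ge t B with hB1 | hB2
      · apply hθ2 (m₀ - j)
        constructor
        · push_cast; rw [hA] at hA2; linarith
        · push_cast; rw [hB] at hB1; linarith
      · have := hc2 hB2
        apply hθ1 (-j - 1)
        constructor
        · push_cast; linarith
        · push_cast; linarith
  obtain ⟨j₁, hcase1⟩ := reduce θ₁ hp1 hp2
  obtain ⟨j₂, hcase2⟩ := reduce θ₂ hq1 hq2
  set t := θ₁ - 2 * π * j₁ with ht
  set s := θ₂ - 2 * π * j₂ with hs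
  have hgap : (A - b₁) + (a₁ + 2*π - B) ≤ 2 * β := by
    rw [hA, hB]; push_cast at hI2 ⊢; linarith
  rcases hcase1 with ⟨ht1, ht2⟩ | ⟨ht1, ht2⟩ <;> rcases hcase2 with ⟨hs1, hs2⟩ | ⟨hs1, hs2⟩
  · refine ⟨2 * (j₁ - j₂), ?_⟩
    have heq : θ₁ - θ₂ - π * (2 * ((j₁:ℝ) - j₂)) = t - s := by rw [ht, hs]; ring
    push_cast
    rw [heq, abs_le]
    constructor <;> linarith
  · refine ⟨2 * (j₁ - j₂) - 1, ?_⟩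
    have heq : θ₁ - θ₂ - π * (2 * ((j₁:ℝ) - j₂) - 1) = (t - s) + π := by rw [ht, hs]; ring
    push_cast
    rw [heq, abs_le]
    have hBA : π - β ≤ B - A := by rw [hA, hB]; linarith
    constructor <;> linarith
  · refine ⟨2 * (j₁ - j₂) + 1, ?_⟩
    have heq : θ₁ - θ₂ - π * (2 * ((j₁:ℝ) - j₂) + 1) = (t - s) - π := by rw [ht, hs]; ring
    push_cast
    rw [heq, abs_le]
    have hBA : π - β ≤ B - A := by rw [hA, hB]; linarith
    constructor <;> linarith
  · refine ⟨2 * (j₁ - j₂), ?_⟩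
    have heq : θ₁ - θ₂ - π * (2 * ((j₁:ℝ) - j₂)) = t - s := by rw [ht, hs]; ring
    push_cast
    rw [heq, abs_le]
    constructor <;> linarith

/-! #### Miscellaneous small lemmas -/

lemma not_in_arc {x : E2} {r a b ψ : ℝ} {S : Set E2}
    (hsub : circlePt x r '' Set.Ioo a b ⊆ S) (hP : circlePt x r ψ ∉ S) :
    ∀ m : ℤ, ψ + 2 * π * m ∉ Ioo a b := by
  intro m hm
  apply hP
  rw [← circlePt_periodic x r ψ m]
  exact hsub (mem_image_of_mem _ hm)

lemma arcs_disjoint_classes {x : E2} {r a₁ b₁ a₂ b₂ : ℝ} {S T : Set E2}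
    (hsub1 : circlePt x r '' Set.Ioo a₁ b₁ ⊆ S)
    (hsub2 : circlePt x r '' Set.Ioo a₂ b₂ ⊆ T)
    (hST : ∀ w, w ∈ S → w ∉ T) :
    ∀ (m : ℤ), ∀ t ∈ Ioo a₁ b₁, t + 2 * π * m ∉ Ioo a₂ b₂ := by
  intro m t ht hmem
  have h1 : circlePt x r t ∈ S := hsub1 (mem_image_of_mem _ ht)
  have h2 : circlePt x r t ∈ T := by
    rw [← circlePt_periodic x r t m]
    exact hsub2 (mem_image_of_mem _ hmem)
  exact hST _ h1 h2

lemma inner_val (p q z : E2) :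
    ⟪p - z, q - z⟫ = (‖p - z‖^2 + ‖q - z‖^2 - ‖p - q‖^2) / 2 := by
  have h := norm_sub_sq_real (p - z) (q - z)
  have h2 : (p - z) - (q - z) = p - q := by abel
  rw [h2] at h
  linarith

lemma arccos_le_of_cos_le {x q : ℝ} (hx0 : 0 ≤ x) (hxπ : x ≤ π) (hq1 : q ≤ 1)
    (h : Real.cos x ≤ q) : Real.arccos q ≤ x := by
  by_contra h'
  push_neg at h'
  have h2 : Real.cos (Real.arccos q) < Real.cos x :=
    Real.cos_lt_cos_of_nonneg_of_le_pi hx0 (Real.arccos_le_pi q) h'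
  rw [Real.cos_arccos (by linarith [Real.neg_one_le_cos x]) hq1] at h2
  linarith

lemma cos_dec {x η : ℝ} (hη : 0 ≤ η) (hηπ : η ≤ 2*π) : Real.cos x - η ≤ Real.cos (x + η) := by
  have h := Real.cos_sub_cos x (x + η)
  have h2 : |Real.sin ((x - (x+η))/2)| ≤ |(x - (x+η))/2| := Real.abs_sin_le_abs
  have h3 : Real.sin (-(η/2)) = - Real.sin (η/2) := Real.sin_neg _
  have h4 : Real.sin (x + η/2) ≤ 1 := Real.sin_le_one _
  have h5 : Real.sin (x + η/2) ≥ -1 := Real.neg_one_le_sin _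
  have h6 : Real.sin (η/2) ≤ η/2 := Real.sin_le (by linarith)
  have h7 : 0 ≤ Real.sin (η/2) := Real.sin_nonneg_of_nonneg_of_le_pi (by linarith) (by linarith)
  have h8 : (x - (x+η))/2 = -(η/2) := by ring
  rw [h8, h3] at h
  have h9 : (x + (x+η))/2 = x + η/2 := by ring
  rw [h9] at h
  nlinarith

lemma inner_pol (a b : E2) :
    ⟪a, b⟫ = (‖a‖^2 + ‖b‖^2 - ‖a - b‖^2) / 2 := by
  have h := norm_sub_sq_real a b
  linarith



lemma cos_dec' {x η : ℝ} (hη : 0 ≤ η) (hηπ : η ≤ 2*π) : Real.cos x - η ≤ Real.cos (x + η) := by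
  have h := Real.cos_sub_cos x (x + η)
  have h4 : Real.sin (x + η/2) ≤ 1 := Real.sin_le_one _
  have h5 : Real.sin (x + η/2) ≥ -1 := Real.neg_one_le_sin _
  have h6 : Real.sin (η/2) ≤ η/2 := Real.sin_le (by linarith)
  have h7 : 0 ≤ Real.sin (η/2) := Real.sin_nonneg_of_nonneg_of_le_pi (by linarith) (by linarith)
  have h8 : (x - (x+η))/2 = -(η/2) := by ring
  have h9 : (x + (x+η))/2 = x + η/2 := by ring
  rw [h8, h9, Real.sin_neg] at h
  nlinarith

/-- The trigonometric core of Claim A. -/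
lemma claimA_trig {s₀ r β d : ℝ} (hs₀ : 0 < s₀) (hr : 0 < r) (hrle : r ≤ s₀)
    (hβ0 : 0 < β) (hβ12 : β ≤ π/12)
    (hsq : s₀^2 = r^2*(2 - 2*Real.cos d))
    (hm : ∃ m : ℤ, |d - π*m| ≤ 2*β) :
    2*r*Real.cos β ≤ s₀ := by
  have hπpos := Real.pi_pos
  obtain ⟨m, hm⟩ := hm
  set e := d - π*m with he
  have h2β : 2*β ≤ π/6 := by linarith
  have hcos_e : Real.cos (2*β) ≤ Real.cos e := by
    rw [← Real.cos_abs e]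
    exact Real.cos_le_cos_of_nonneg_of_le_pi (abs_nonneg _) (by linarith) hm
  rcases Int.even_or_odd m with ⟨n, hn⟩ | ⟨n, hn⟩
  · exfalso
    have hd : Real.cos d = Real.cos e := by
      have heq : d = e + (n:ℝ)*(2*π) := by rw [he, hn]; push_cast; ring
      rw [heq, Real.cos_add_int_mul_two_pi]
    have hcos6 : Real.cos (π/6) ≤ Real.cos (2*β) :=
      Real.cos_le_cos_of_nonneg_of_le_pi (by positivity) (by linarith) h2β
    rw [Real.cos_pi_div_six] at hcos6
    have h3 : Real.sqrt 3 ^ 2 = 3 := Real.sq_sqrt (by norm_num)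
    have hsqrt1 : (1:ℝ) < Real.sqrt 3 := by nlinarith [Real.sqrt_nonneg 3]
    have hsqrt2 : Real.sqrt 3 ≤ 2 := by nlinarith [Real.sqrt_nonneg 3]
    have hc1 : Real.sqrt 3 / 2 ≤ Real.cos d := by rw [hd]; linarith
    have h2' : s₀^2 ≤ r^2*(2 - Real.sqrt 3) := by nlinarith [sq_nonneg r]
    have h3' : r^2 ≤ s₀^2 := by nlinarith
    have h4' : s₀^2 ≤ (2 - Real.sqrt 3) * s₀^2 := by nlinarith
    nlinarith [sq_nonneg s₀]
  · have hd : Real.cos d = - Real.cos e := by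
      have heq : d = (e + π) + (n:ℝ)*(2*π) := by rw [he, hn]; push_cast; ring
      rw [heq, Real.cos_add_int_mul_two_pi, Real.cos_add_pi]
    have hcsq := Real.cos_sq β
    have hcosβpos : 0 ≤ Real.cos β := by
      apply Real.cos_nonneg_of_mem_Icc
      constructor <;> [linarith; linarith]
    have hse : s₀^2 = r^2*(2 + 2*Real.cos e) := by rw [hsq, hd]; ring
    have hsq2 : (2*r*Real.cos β)^2 = r^2*(2 + 2*Real.cos (2*β)) := by
      linear_combination (4*r^2) * hcsq
    have hfin : (2*r*Real.cos β)^2 ≤ s₀^2 := by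
      rw [hsq2, hse]
      nlinarith [sq_nonneg r, hcos_e]
    have hqnn : 0 ≤ 2*r*Real.cos β := by positivity
    nlinarith [hfin, hs₀.le, hqnn]

/-- Removing the `η` error by continuity. -/
lemma key_limit {s₀ r x : ℝ} (hr : 0 < r)
    (h : ∀ η : ℝ, 0 < η → η ≤ π/24 → 2*r*Real.cos (x + η) ≤ s₀) : 2*r*Real.cos x ≤ s₀ := by
  have hπpos := Real.pi_pos
  by_contra hcon
  push_neg at hcon
  set ε := 2*r*Real.cos x - s₀ with hε'
  have hεpos : 0 < ε := by linarith
  set η := min (π/24) (ε/(2*r+1)) with hηdef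
  have hηpos : 0 < η := lt_min (by positivity) (by positivity)
  have h1 := h η hηpos (min_le_left _ _)
  have h2 : Real.cos x - η ≤ Real.cos (x + η) := by
    apply cos_dec' hηpos.le
    have := min_le_left (π/24) (ε/(2*r+1))
    rw [hηdef]
    linarith
  have h3 : η ≤ ε/(2*r+1) := min_le_right _ _
  have h5 : 2*r*(ε/(2*r+1)) < ε := by
    have hq : 2*r*(ε/(2*r+1))*(2*r+1) = 2*r*ε := by field_simp
    nlinarith
  nlinarith [h1, h2, hr]

/-- The numeric consequences of `2 r cos X ≤ s₀`. -/
lemma numerics {s₀ r X C₀ S : ℝ} (hs₀ : 0 < s₀) (hr : 0 < r) (hrle : r ≤ s₀) (h2r : s₀ ≤ 2*r)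
    (hC₀ : 0 < C₀) (hXpos : 0 < X) (hX24 : X ≤ π/24)
    (hkey : 2*r*Real.cos X ≤ s₀) (hS : 0 < S) (hSle : S ≤ 1) (hXS : X ≤ C₀*S) :
    (r - s₀/2 < C₀^2*(S*s₀)) ∧ (r^2 - s₀^2/4 < C₀^2*(S*s₀^2)) ∧
    (Real.cos X ≤ s₀/(2*r)) ∧ (s₀/(2*r) ≤ 1) := by
  have hπpos := Real.pi_pos
  have hX1 : X ≤ 1/2 := by linarith [Real.pi_le_four]
  have hcosX : 1 - X^2/2 ≤ Real.cos X := Real.one_sub_sq_div_two_le_cos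
  have hgap : r - s₀/2 ≤ (s₀/2) * X^2 := by
    have g1 : 2*r*(1 - X^2/2) ≤ 2*r*Real.cos X := by nlinarith
    have g2 : r*X^2 ≤ s₀*X^2 := by nlinarith [sq_nonneg X]
    nlinarith
  have hXb : X^2 ≤ C₀^2*S := by nlinarith
  refine ⟨?_, ?_, ?_, ?_⟩
  · have f1 : (s₀/2)*X^2 ≤ (s₀/2)*(C₀^2*S) := by nlinarith
    have f2 : (s₀/2)*(C₀^2*S) < C₀^2*(S*s₀) := by nlinarith [mul_pos (mul_pos (pow_pos hC₀ 2) hS) hs₀]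
    linarith
  · have e2 : r + s₀/2 ≤ (3/2)*s₀ := by linarith
    have e4 : (0:ℝ) ≤ r - s₀/2 := by linarith
    have e5 : (r - s₀/2)*(r + s₀/2) ≤ ((s₀/2)*X^2)*((3/2)*s₀) :=
      mul_le_mul hgap e2 (by linarith) (by positivity)
    have e8 : (3/4)*s₀^2*X^2 ≤ (3/4)*s₀^2*(C₀^2*S) := by nlinarith [sq_nonneg s₀]
    have e9 : (3/4)*s₀^2*(C₀^2*S) < C₀^2*(S*s₀^2) := by
      nlinarith [mul_pos (mul_pos (pow_pos hC₀ 2) hS) (pow_pos hs₀ 2)]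
    have e1 : r^2 - s₀^2/4 = (r - s₀/2)*(r + s₀/2) := by ring
    rw [e1]
    calc (r - s₀/2)*(r + s₀/2) ≤ ((s₀/2)*X^2)*((3/2)*s₀) := e5
    _ = (3/4)*s₀^2*X^2 := by ring
    _ ≤ (3/4)*s₀^2*(C₀^2*S) := e8
    _ < C₀^2*(S*s₀^2) := e9
  · rw [le_div_iff₀ (by positivity)]
    nlinarith
  · rw [div_le_one (by positivity)]
    linarith

lemma chain_bound {X C₀ S S' : ℝ} (h1 : X ≤ C₀*S) (h2 : S ≤ S') (h3 : 0 ≤ S') (hC : 0 < C₀) :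
    X ≤ (2*C₀+2*C₀^2)*S' := by nlinarith

set_option maxHeartbeats 1000000 in
/-- Half-Scales Lemma: for `x₀ ∈ Γ`, small `s₀` and `y ∈ ∂B(x₀,s₀) ∩ Γ`, there is `z ∈ Γ`
within `C₀ s₀^{α/2+1}` of the midpoint of `[x₀,y]`, equidistant from `x₀` and `y` with this
common distance `s₁` satisfying `|s₁ - s₀/2| < C₀² s₀^{α+1}`, and with the lines `(x₀,z)` and
`(z,y)` making angle at most `C₁ s₀^{α/2}` with the line `(x₀,y)`, where `C₁ = 2C₀ + 2C₀²`. -/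
theorem half_scales (Ωp : Set E2) (hΩ : IsJordanDomain Ωp)
    (Ωm : Set E2) (hΩm : Ωm = (closure Ωp)ᶜ)
    (Γ : Set E2) (hΓp : Γ = frontier Ωp) (hΓm : Γ = frontier Ωm)
    (α C₀ : ℝ) (hα : α ∈ Set.Ioo (0 : ℝ) 1) (hC₀ : 0 < C₀)
    (r₀ : ℝ) (hr₀ : 0 < r₀)
    (hε : ∀ x ∈ Γ, ∀ r : ℝ, 0 < r → r ≤ r₀ → carlesonEps Ωp x r ≤ C₀ * r ^ α) :
    ∃ ρ₀ : ℝ, 0 < ρ₀ ∧ ρ₀ ≤ r₀ ∧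
      ∀ x₀ ∈ Γ, ∀ s₀ : ℝ, 0 < s₀ → s₀ ≤ ρ₀ →
        ∀ y ∈ Metric.sphere x₀ s₀ ∩ Γ,
          ∃ z ∈ Γ,
            dist (midpoint ℝ x₀ y) z < C₀ * s₀ ^ (α / 2 + 1) ∧
            dist z x₀ = dist z y ∧
            |dist z x₀ - s₀ / 2| < C₀ ^ 2 * s₀ ^ (α + 1) ∧
            lineAngle (y - x₀) (z - x₀) ≤ (2 * C₀ + 2 * C₀ ^ 2) * s₀ ^ (α / 2) ∧
            lineAngle (y - x₀) (y - z) ≤ (2 * C₀ + 2 * C₀ ^ 2) * s₀ ^ (α / 2) := by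
  have hΩpOpen : IsOpen Ωp := hΩ.1
  have hΩmOpen : IsOpen Ωm := by rw [hΩm]; exact isClosed_closure.isOpen_compl
  have hdisjPM : ∀ w, w ∈ Ωp → w ∉ Ωm := by
    intro w hw hw'; rw [hΩm] at hw'; exact hw' (subset_closure hw)
  have hΓp' : ∀ w ∈ Γ, w ∉ Ωp := by
    intro w hw hmem; rw [hΓp] at hw; exact hw.2 (by rwa [hΩpOpen.interior_eq])
  have hΓm' : ∀ w ∈ Γ, w ∉ Ωm := by
    intro w hw hmem; rw [hΩm] at hmem; rw [hΓp] at hw; exact hmem hw.1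
  have hpart : ∀ w : E2, w ∈ Ωp ∨ w ∈ Γ ∨ w ∈ Ωm := by
    intro w
    by_cases h1 : w ∈ Ωp
    · exact Or.inl h1
    by_cases h2 : w ∈ closure Ωp
    · refine Or.inr (Or.inl ?_)
      rw [hΓp]; exact ⟨h2, by rwa [hΩpOpen.interior_eq]⟩
    · exact Or.inr (Or.inr (by rw [hΩm]; exact h2))
  have hα0 := hα.1
  have hα1 := hα.2
  have hπpos := Real.pi_pos
  -- choice of ρ₀
  set ρ₂ : ℝ := (π/(24*C₀)) ^ (1/α : ℝ) with hρ₂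
  have hρ₂pos : 0 < ρ₂ := Real.rpow_pos_of_pos (by positivity) _
  refine ⟨min r₀ (min 1 ρ₂), lt_min hr₀ (lt_min one_pos hρ₂pos), min_le_left _ _, ?_⟩
  intro x₀ hx₀ s₀ hs₀pos hs₀ρ y hy
  obtain ⟨hysph, hyΓ⟩ := hy
  have hyx₀ : dist y x₀ = s₀ := mem_sphere.mp hysph
  have hs₀1 : s₀ ≤ 1 := le_trans hs₀ρ (le_trans (min_le_right _ _) (min_le_left _ _))
  have hs₀r₀ : s₀ ≤ r₀ := le_trans hs₀ρ (min_le_left _ _)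
  have hsmall : C₀ * s₀ ^ α ≤ π/24 := by
    have h1 : s₀ ≤ ρ₂ := le_trans hs₀ρ (le_trans (min_le_right _ _) (min_le_right _ _))
    have h2 : s₀ ^ α ≤ ρ₂ ^ α := Real.rpow_le_rpow hs₀pos.le h1 hα0.le
    have h3 : ρ₂ ^ α = π/(24*C₀) := by
      rw [hρ₂, ← Real.rpow_mul (by positivity), one_div, inv_mul_cancel₀ hα0.ne', Real.rpow_one]
    rw [h3] at h2
    calc C₀ * s₀ ^ α ≤ C₀ * (π/(24*C₀)) := mul_le_mul_of_nonneg_left h2 hC₀.le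
    _ = π/24 := by field_simp
  -- existence of wide arcs in both components, for any center on Γ
  have harcs : ∀ w ∈ Γ, ∀ r η : ℝ, 0 < r → r ≤ r₀ → 0 < η →
      C₀ * r ^ α ≤ π/24 →
      ∃ a b a' b' : ℝ,
        (a < b ∧ b - a ≤ 2*π ∧ π - C₀ * r ^ α - η < b - a ∧
          circlePt w r '' Set.Ioo a b ⊆ Ωp) ∧
        (a' < b' ∧ b' - a' ≤ 2*π ∧ π - C₀ * r ^ α - η < b' - a' ∧
          circlePt w r '' Set.Ioo a' b' ⊆ Ωm) := by
    intro w hw r η hr hrr₀ hη hrsmall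
    have hεw := hε w hw r hr hrr₀
    rw [carlesonEps] at hεw
    have hπ4 : C₀ * r ^ α < π := by linarith
    have hmax : max |π * r - maxArcMeasure Ωp w r|
        |π * r - maxArcMeasure ((closure Ωp)ᶜ) w r| ≤ (C₀ * r ^ α) * r := by
      have hm := mul_le_mul_of_nonneg_left hεw (le_of_lt hr)
      calc max |π * r - maxArcMeasure Ωp w r|
            |π * r - maxArcMeasure ((closure Ωp)ᶜ) w r|
          = r * ((1/r) * max |π * r - maxArcMeasure Ωp w r|
            |π * r - maxArcMeasure ((closure Ωp)ᶜ) w r|) := by field_simp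
        _ ≤ r * (C₀ * r ^ α) := hm
        _ = (C₀ * r ^ α) * r := by ring
    have hCnn : 0 ≤ (C₀ * r ^ α) * r := by positivity
    have hCr : (C₀ * r ^ α) * r < π * r := mul_lt_mul_of_pos_right hπ4 hr
    have hdivC : (C₀ * r ^ α) * r / r = C₀ * r ^ α := mul_div_cancel_right₀ _ hr.ne'
    have hM1 : |π * r - maxArcMeasure Ωp w r| ≤ (C₀ * r ^ α) * r :=
      le_trans (le_max_left _ _) hmax
    have hM2 : |π * r - maxArcMeasure Ωm w r| ≤ (C₀ * r ^ α) * r := by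
      rw [hΩm]; exact le_trans (le_max_right _ _) hmax
    obtain ⟨a, b, hab, hble, hlen, hsub⟩ := arcs_exist hr hM1 hCnn hCr hη
    obtain ⟨a', b', hab', hble', hlen', hsub'⟩ := arcs_exist hr hM2 hCnn hCr hη
    rw [hdivC] at hlen hlen'
    exact ⟨a, b, a', b', ⟨hab, hble, hlen, hsub⟩, ⟨hab', hble', hlen', hsub'⟩⟩
  -- Step 2: find z on the bisector
  have hx₀y : dist x₀ y = s₀ := by rw [dist_comm]; exact hyx₀
  obtain ⟨τ, hτ⟩ := exists_angle hs₀pos hx₀y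
  set kp : E2 := circlePt y s₀ (τ + π/3) with hkp
  set km : E2 := circlePt y s₀ (τ - π/3) with hkm
  have hzex : ∃ z, z ∈ Γ ∧ z ∈ segment ℝ km kp := by
    by_contra hcon
    push_neg at hcon
    have hsegsub : segment ℝ km kp ⊆ Ωp ∪ Ωm := by
      intro w hw
      rcases hpart w with h | h | h
      · exact Or.inl h
      · exact absurd hw (hcon w h)
      · exact Or.inr h
    have hseg2 := ((convex_segment km kp).isPreconnected).subset_or_subset hΩpOpen hΩmOpen
        (Set.disjoint_left.mpr (fun {w} hwp hwm => hdisjPM w hwp hwm)) hsegsub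
    obtain ⟨a, b, a', b', ⟨hab, hble, hlen, hsubP⟩, ⟨hab', hble', hlen', hsubM⟩⟩ :=
      harcs y hyΓ s₀ (π/24) hs₀pos hs₀r₀ (by positivity) hsmall
    set β : ℝ := C₀ * s₀ ^ α + π/24 with hβ
    have hβ0 : 0 < β := by positivity
    have hβ6 : β < π/6 := by rw [hβ]; linarith
    rcases hseg2 with hsegP | hsegM
    · have hkpP : kp ∈ Ωp := hsegP (right_mem_segment _ _ _)
      have hkmP : km ∈ Ωp := hsegP (left_mem_segment _ _ _)
      refine gap_forcing τ hβ0 hβ6 (by rw [hβ]; linarith) hble' (by rw [hβ]; linarith) hble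
        ?_ ?_ ?_ ?_ ?_
      · exact not_in_arc hsubM (fun h => hdisjPM _ hkmP h)
      · exact not_in_arc hsubM (fun h => hΓm' x₀ hx₀ (by rw [hτ]; exact h))
      · exact not_in_arc hsubM (fun h => hdisjPM _ hkpP h)
      · exact not_in_arc hsubP (fun h => hΓp' x₀ hx₀ (by rw [hτ]; exact h))
      · exact arcs_disjoint_classes hsubM hsubP (fun w hm hp => hdisjPM w hp hm)
    · have hkpM : kp ∈ Ωm := hsegM (right_mem_segment _ _ _)
      have hkmM : km ∈ Ωm := hsegM (left_mem_segment _ _ _)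
      refine gap_forcing τ hβ0 hβ6 (by rw [hβ]; linarith) hble (by rw [hβ]; linarith) hble'
        ?_ ?_ ?_ ?_ ?_
      · exact not_in_arc hsubP (fun h => hdisjPM _ h hkmM)
      · exact not_in_arc hsubP (fun h => hΓp' x₀ hx₀ (by rw [hτ]; exact h))
      · exact not_in_arc hsubP (fun h => hdisjPM _ h hkpM)
      · exact not_in_arc hsubM (fun h => hΓm' x₀ hx₀ (by rw [hτ]; exact h))
      · exact arcs_disjoint_classes hsubP hsubM (fun w hp hm => hdisjPM w hp hm)
  obtain ⟨z, hzΓ, hzseg⟩ := hzex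
  -- z is equidistant from x₀ and y
  have hkpy : dist kp y = s₀ := dist_circlePt_center y _ hs₀pos.le
  have hkmy : dist km y = s₀ := dist_circlePt_center y _ hs₀pos.le
  have hkpx₀ : dist kp x₀ ^ 2 = s₀ ^ 2 := by
    rw [hτ, hkp, dist_circlePt_sq]
    rw [show τ + π/3 - τ = π/3 by ring, Real.cos_pi_div_three]
    ring
  have hkmx₀ : dist km x₀ ^ 2 = s₀ ^ 2 := by
    rw [hτ, hkm, dist_circlePt_sq]
    rw [show τ - π/3 - τ = -(π/3) by ring, Real.cos_neg, Real.cos_pi_div_three]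
    ring
  have hF : ∀ w : E2, ‖w - x₀‖^2 - ‖w - y‖^2 = 2*⟪w, y - x₀⟫ + (‖x₀‖^2 - ‖y‖^2) := by
    intro w
    have h1 := norm_sub_sq_real w x₀
    have h2 := norm_sub_sq_real w y
    have h3 : ⟪w, y - x₀⟫ = ⟪w, y⟫ - ⟪w, x₀⟫ := inner_sub_right _ _ _
    linarith
  have hFz : ‖z - x₀‖^2 = ‖z - y‖^2 := by
    obtain ⟨u, v, hu, hv, huv, hzdef⟩ := hzseg
    have hFkp : 2*⟪kp, y - x₀⟫ + (‖x₀‖^2 - ‖y‖^2) = 0 := by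
      have h := hF kp
      rw [← dist_eq_norm, ← dist_eq_norm] at h
      rw [hkpy] at h
      linarith [hkpx₀]
    have hFkm : 2*⟪km, y - x₀⟫ + (‖x₀‖^2 - ‖y‖^2) = 0 := by
      have h := hF km
      rw [← dist_eq_norm, ← dist_eq_norm] at h
      rw [hkmy] at h
      linarith [hkmx₀]
    have hinner : ⟪z, y - x₀⟫ = u*⟪km, y - x₀⟫ + v*⟪kp, y - x₀⟫ := by
      rw [← hzdef, inner_add_left, real_inner_smul_left, real_inner_smul_left]
    have h := hF z
    rw [hinner] at h
    linear_combination h + u * hFkm + v * hFkp - (‖x₀‖^2 - ‖y‖^2) * huv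
  have hzeq : dist z x₀ = dist z y := by
    rw [dist_eq_norm, dist_eq_norm]
    exact (sq_eq_sq₀ (norm_nonneg _) (norm_nonneg _)).mp hFz
  set r := dist z x₀ with hrdef
  have hrzy : dist z y = r := hzeq.symm
  have hrle : r ≤ s₀ := by
    have hsub : segment ℝ km kp ⊆ closedBall y s₀ :=
      (convex_closedBall y s₀).segment_subset (mem_closedBall.mpr hkmy.le)
        (mem_closedBall.mpr hkpy.le)
    have := hsub hzseg
    rw [mem_closedBall] at this
    rw [← hrzy]; exact this
  have h2r : s₀ ≤ 2*r := by
    have h := dist_triangle x₀ z y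
    rw [hx₀y, dist_comm x₀ z, ← hrdef, hrzy] at h
    linarith
  have hrpos : 0 < r := by linarith
  have hrles : r ^ α ≤ s₀ ^ α := Real.rpow_le_rpow hrpos.le hrle hα0.le
  have hrα : C₀ * r ^ α ≤ C₀ * s₀ ^ α := mul_le_mul_of_nonneg_left hrles hC₀.le
  -- Claim A at z: quantitative bound on r
  have hkey : 2*r*Real.cos (C₀ * r ^ α) ≤ s₀ := by
    apply key_limit hrpos
    intro η hη hη24
    obtain ⟨a, b, a', b', ⟨hab, hble, hlen, hsubP⟩, ⟨hab', hble', hlen', hsubM⟩⟩ :=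
      harcs z hzΓ r η hrpos (le_trans hrle hs₀r₀) hη (le_trans hrα hsmall)
    obtain ⟨θx, hθx⟩ := exists_angle hrpos (show dist x₀ z = r by rw [dist_comm])
    obtain ⟨θy, hθy⟩ := exists_angle hrpos (show dist y z = r by rw [dist_comm, hrzy])
    set β := C₀ * r ^ α + η with hβd
    have hβ0 : 0 < β := by positivity
    have hβ12 : β ≤ π/12 := by
      have := le_trans hrα hsmall
      rw [hβd]; linarith
    have hm := same_gap (θ₁ := θx) (θ₂ := θy) hβ0 hab hab'
      (by rw [hβd]; linarith) hble (by rw [hβd]; linarith) hble'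
      (arcs_disjoint_classes hsubP hsubM (fun w hp hmm => hdisjPM w hp hmm))
      (not_in_arc hsubP (fun h => hΓp' x₀ hx₀ (by rw [hθx]; exact h)))
      (not_in_arc hsubM (fun h => hΓm' x₀ hx₀ (by rw [hθx]; exact h)))
      (not_in_arc hsubP (fun h => hΓp' y hyΓ (by rw [hθy]; exact h)))
      (not_in_arc hsubM (fun h => hΓm' y hyΓ (by rw [hθy]; exact h)))
    have hs₀sq : s₀^2 = r^2*(2 - 2*Real.cos (θx - θy)) := by
      calc s₀^2 = dist x₀ y^2 := by rw [hx₀y]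
      _ = dist (circlePt z r θx) (circlePt z r θy) ^2 := by rw [← hθx, ← hθy]
      _ = _ := dist_circlePt_sq z r θx θy
    exact claimA_trig hs₀pos hrpos hrle hβ0 hβ12 hs₀sq hm
  -- numeric consequences
  have hs₀α1 : s₀ ^ α ≤ 1 := Real.rpow_le_one hs₀pos.le hs₀1 hα0.le
  have hs₀αpos : 0 < s₀ ^ α := Real.rpow_pos_of_pos hs₀pos _
  have hXpos : 0 < C₀ * r ^ α := by
    have : 0 < r ^ α := Real.rpow_pos_of_pos hrpos _
    positivity
  obtain ⟨hn₂, hn₃, hcosle, hsr1⟩ :=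
    numerics (S := s₀ ^ α) hs₀pos hrpos hrle h2r hC₀ hXpos (le_trans hrα hsmall) hkey
      hs₀αpos hs₀α1 hrα
  have hsα1 : s₀ ^ (α+1) = s₀ ^ α * s₀ := by rw [Real.rpow_add hs₀pos, Real.rpow_one]
  -- conclusion (ii)
  have hii : |dist z x₀ - s₀/2| < C₀^2 * s₀^(α+1) := by
    rw [← hrdef, abs_of_nonneg (by linarith : (0:ℝ) ≤ r - s₀/2), hsα1]
    calc r - s₀/2 < C₀^2*(s₀^α*s₀) := hn₂
    _ = C₀^2 * (s₀^α*s₀) := by ring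
  -- norms and inner products
  have hn1 : ‖y - x₀‖ = s₀ := by rw [← dist_eq_norm]; exact hyx₀
  have hn2 : ‖z - x₀‖ = r := by rw [← dist_eq_norm]
  have hn3 : ‖y - z‖ = r := by rw [← dist_eq_norm, dist_comm]; exact hrzy
  have hn4 : ‖x₀ - z‖ = r := by rw [← dist_eq_norm, dist_comm]
  have hinner1 : ⟪y - x₀, z - x₀⟫ = s₀^2/2 := by
    have h := inner_pol (y - x₀) (z - x₀)
    have hsub : (y - x₀) - (z - x₀) = y - z := by abel
    rw [hsub, hn1, hn2, hn3] at h
    rw [h]; ring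
  have hinner2 : ⟪y - x₀, y - z⟫ = s₀^2/2 := by
    have h := inner_pol (y - x₀) (y - z)
    have hsub : (y - x₀) - (y - z) = z - x₀ := by abel
    rw [hsub, hn1, hn2, hn3] at h
    rw [h]; ring
  -- conclusion (i)
  have hmid : dist (midpoint ℝ x₀ y) z ^2 = r^2 - s₀^2/4 := by
    have hinner3 : ⟪x₀ - z, y - z⟫ = (r^2 + r^2 - s₀^2)/2 := by
      have h := inner_pol (x₀ - z) (y - z)
      have hsub : (x₀ - z) - (y - z) = x₀ - y := by abel
      have hn5 : ‖x₀ - y‖ = s₀ := by rw [← dist_eq_norm]; exact hx₀y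
      rw [hsub, hn4, hn3, hn5] at h
      rw [h]
    have hmz : midpoint ℝ x₀ y - z = (2⁻¹ : ℝ) • ((x₀ - z) + (y - z)) := by
      rw [midpoint_eq_smul_add, invOf_eq_inv]
      module
    rw [dist_eq_norm, hmz, norm_smul]
    have hnadd : ‖(x₀ - z) + (y - z)‖^2 = 4*r^2 - s₀^2 := by
      rw [norm_add_sq_real, hn4, hn3, hinner3]
      ring
    have hnhalf : ‖(2⁻¹:ℝ)‖ = 2⁻¹ := by rw [Real.norm_eq_abs]; norm_num
    rw [hnhalf, mul_pow, hnadd]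
    ring
  have hi : dist (midpoint ℝ x₀ y) z < C₀ * s₀ ^ (α/2+1) := by
    have hrs2 : (C₀*s₀^(α/2+1))^2 = C₀^2 * (s₀^α * s₀^2) := by
      rw [mul_pow]
      congr 1
      rw [sq (s₀ ^ (α/2+1)), ← Real.rpow_add hs₀pos,
        show α/2+1+(α/2+1) = α + 2 by ring, Real.rpow_add hs₀pos]
      congr 1
      rw [show (2:ℝ) = ((2:ℕ):ℝ) by norm_num, Real.rpow_natCast]
    have hd2 : dist (midpoint ℝ x₀ y) z ^2 < (C₀*s₀^(α/2+1))^2 := by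
      rw [hmid, hrs2]
      exact hn₃
    exact lt_of_pow_lt_pow_left₀ 2 (by positivity) hd2
  -- angles
  have hXπ : C₀ * r ^ α ≤ π := by
    have := le_trans hrα hsmall
    linarith
  have harc : Real.arccos (s₀/(2*r)) ≤ C₀ * r ^ α :=
    arccos_le_of_cos_le hXpos.le hXπ hsr1 hcosle
  have hs₀half : s₀ ^ α ≤ s₀ ^ (α/2) :=
    Real.rpow_le_rpow_of_exponent_ge hs₀pos hs₀1 (by linarith)
  have hchain : C₀ * r ^ α ≤ (2*C₀ + 2*C₀^2) * s₀^(α/2) :=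
    chain_bound hrα hs₀half (Real.rpow_nonneg hs₀pos.le _) hC₀
  have hang1 : lineAngle (y - x₀) (z - x₀) ≤ (2*C₀ + 2*C₀^2) * s₀^(α/2) := by
    have hq1 : ⟪y - x₀, z - x₀⟫/(‖y - x₀‖*‖z - x₀‖) = s₀/(2*r) := by
      rw [hinner1, hn1, hn2]
      field_simp
    have hangle : InnerProductGeometry.angle (y - x₀) (z - x₀) = Real.arccos (s₀/(2*r)) := by
      rw [InnerProductGeometry.angle, hq1]
    calc lineAngle (y - x₀) (z - x₀) ≤ InnerProductGeometry.angle (y - x₀) (z - x₀) :=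
          min_le_left _ _
    _ = Real.arccos (s₀/(2*r)) := hangle
    _ ≤ C₀ * r ^ α := harc
    _ ≤ _ := hchain
  have hang2 : lineAngle (y - x₀) (y - z) ≤ (2*C₀ + 2*C₀^2) * s₀^(α/2) := by
    have hq2 : ⟪y - x₀, y - z⟫/(‖y - x₀‖*‖y - z‖) = s₀/(2*r) := by
      rw [hinner2, hn1, hn3]
      field_simp
    have hangle : InnerProductGeometry.angle (y - x₀) (y - z) = Real.arccos (s₀/(2*r)) := by
      rw [InnerProductGeometry.angle, hq2]
    calc lineAngle (y - x₀) (y - z) ≤ InnerProductGeometry.angle (y - x₀) (y - z) :=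
          min_le_left _ _
    _ = Real.arccos (s₀/(2*r)) := hangle
    _ ≤ C₀ * r ^ α := harc
    _ ≤ _ := hchain
  exact ⟨z, hzΓ, hi, hzeq, hii, hang1, hang2⟩

end
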